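/- For integers k ≥ 1 and T ≥ 3, the negative continued fraction [2, ..., 2, T, 2] with (k-1) twos, then T, then 2, equals -(k(2T-3) + 2) / ((k-1)(2T-3) + 2). -/

import Mathlib

/-- Negative continued fraction: `ncf [a_0, …, a_k] = -a_0 - 1/(ncf [a_1, …, a_k])`. -/
def ncf : List ℤ → ℚ
  | [] => 0
  | [a] => -(a : ℚ)
  | a :: b :: l => -(a : ℚ) - 1 / ncf (b :: l)

lemma ncf_cons (a : ℤ) (l : List ℤ) (hl : l ≠ []) :
    ncf (a :: l) = -(a : ℚ) - 1 / ncf l := by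
  cases l with
  | nil => exact absurd rfl hl
  | cons b t => rfl

theorem ncf_twos_T_two (k : ℕ) (hk : 1 ≤ k) (T : ℤ) (hT : 3 ≤ T) :
    ncf (List.replicate (k - 1) 2 ++ [T, 2])
      = -((k : ℚ) * (2 * (T : ℚ) - 3) + 2) / (((k : ℚ) - 1) * (2 * (T : ℚ) - 3) + 2) := by
  have hT' : (3 : ℚ) ≤ (T : ℚ) := by exact_mod_cast hT
  induction k, hk using Nat.le_induction with
  | base =>
      simp only [Nat.sub_self, List.replicate_zero, List.nil_append]
      show -(T : ℚ) - 1 / (-(2 : ℚ)) = _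
      push_cast
      field_simp
      ring
  | succ n hn ih =>
      have hpos : (0 : ℚ) < ((n : ℚ) - 1) * (2 * (T : ℚ) - 3) + 2 := by
        have : (1 : ℚ) ≤ (n : ℚ) := by exact_mod_cast hn
        nlinarith
      have hnum : ((n : ℚ) * (2 * (T : ℚ) - 3) + 2) > 0 := by
        have : (1 : ℚ) ≤ (n : ℚ) := by exact_mod_cast hn
        nlinarith
      have hrep : (n + 1 - 1 : ℕ) = n := by omega
      have hrep2 : List.replicate n (2 : ℤ) = 2 :: List.replicate (n - 1) 2 := by
        cases n with
        | zero => omega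
        | succ m => simp [List.replicate_succ]
      rw [hrep, hrep2, List.cons_append, ncf_cons 2 _ (by simp), ih]
      push_cast
      have h1 : ((n : ℚ) * (2 * (T : ℚ) - 3) + 2) ≠ 0 := hnum.ne'
      have h2 : ((n : ℚ) - 1) * (2 * (T : ℚ) - 3) + 2 ≠ 0 := hpos.ne'
      have h3 : ((n : ℚ) + 1 - 1) * (2 * (T : ℚ) - 3) + 2 ≠ 0 := by
        have : (n : ℚ) + 1 - 1 = (n : ℚ) := by ring
        rw [this]; exact h1
      rw [neg_div, one_div_neg_eq_neg_one_div, one_div_div]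
      rw [show (n : ℚ) + 1 - 1 = (n : ℚ) by ring]
      field_simp
      ring
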